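/- Every Fröberg sequence h_• = |n; d_1,...,d_m| is the Hilbert function of R/K for some almost reverse lexicographic ideal K in a polynomial ring R = k[x_1,...,x_l] (l = n if n ≥ 1, l = 1 if n = 0); in particular every Fröberg sequence is unimodal at each tail. -/

import Mathlib

open scoped Classical

/-- Degree of an exponent vector (monomial). -/
def mdeg {n : ℕ} (m : Fin n → ℕ) : ℕ := ∑ i, m i

/-- Degree reverse lexicographic order: `M > N`. -/
def RevLexGT {n : ℕ} (M N : Fin n → ℕ) : Prop :=
  mdeg N < mdeg M ∨
    (mdeg M = mdeg N ∧ ∃ s : Fin n, (∀ i : Fin n, s < i → M i = N i) ∧ M s < N s)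

/-- A monomial ideal, identified with its set of monomials (exponent vectors),
is upward closed under divisibility. -/
def MonIdeal {n : ℕ} (I : Set (Fin n → ℕ)) : Prop :=
  ∀ m ∈ I, ∀ m' : Fin n → ℕ, (∀ i, m i ≤ m' i) → m' ∈ I

/-- `m` is a minimal generator of the monomial ideal `I`. -/
def MinGen {n : ℕ} (I : Set (Fin n → ℕ)) (m : Fin n → ℕ) : Prop :=
  m ∈ I ∧ ∀ m' ∈ I, (∀ i, m' i ≤ m i) → m' = m

/-- Almost reverse lexicographic ideal. -/
def ARL {n : ℕ} (I : Set (Fin n → ℕ)) : Prop :=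
  ∀ M N : Fin n → ℕ, MinGen I N → mdeg M = mdeg N → RevLexGT M N → M ∈ I

/-- Strongly stable monomial ideal. -/
def StronglyStable {n : ℕ} (I : Set (Fin n → ℕ)) : Prop :=
  MonIdeal I ∧ ∀ M ∈ I, ∀ i j : Fin n, j < i → 0 < M i →
    (fun k => if k = i then M i - 1 else if k = j then M j + 1 else M k) ∈ I

/-- The last generator `M_ω` of a monomial ideal: a minimal generator of maximal
degree which is smallest in the degree reverse lexicographic order among the
minimal generators of that degree. -/
def IsLastGen {n : ℕ} (I : Set (Fin n → ℕ)) (W : Fin n → ℕ) : Prop :=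
  MinGen I W ∧ (∀ N, MinGen I N → mdeg N ≤ mdeg W) ∧
    (∀ N, MinGen I N → mdeg N = mdeg W → N = W ∨ RevLexGT N W)

/-- `max M`: the largest (1-based) index of a variable dividing `M` (0 for `M = 1`). -/
def maxVar {n : ℕ} (m : Fin n → ℕ) : ℕ :=
  Finset.univ.sup (fun i : Fin n => if 0 < m i then i.1 + 1 else 0)

/-- Hilbert function of `R/I`: the number of monomials of degree `d` not in `I`. -/
noncomputable def hilb {n : ℕ} (I : Set (Fin n → ℕ)) (d : ℕ) : ℕ :=
  Set.ncard {m : Fin n → ℕ | mdeg m = d ∧ m ∉ I}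

/-- Truncation of an exponent vector to its first `i` coordinates. -/
def truncW {n : ℕ} (W : Fin n → ℕ) (i : ℕ) : Fin n → ℕ :=
  fun j => if j.1 < i then W j else 0

/-- The set `𝓘_i` (for `i ≤ μ-2`): exponent vectors supported on the first `i`
coordinates, coordinatewise below the `f_j`'s, i.e. not lying in `I`. -/
def Iset {n : ℕ} (I : Set (Fin n → ℕ)) (i : ℕ) : Set (Fin n → ℕ) :=
  {α | (∀ k : Fin n, i ≤ k.1 → α k = 0) ∧ α ∉ I}

/-- The set `𝓘_{μ-1}`, which additionally requires `α ≥ (ω_1,…,ω_{μ-1})`. -/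
def IsetLast {n : ℕ} (I : Set (Fin n → ℕ)) (W : Fin n → ℕ) (μ : ℕ) :
    Set (Fin n → ℕ) :=
  {α | α ∈ Iset I (μ - 1) ∧ (α = truncW W (μ - 1) ∨ RevLexGT α (truncW W (μ - 1)))}

/-- `f_{i+1}(α) = min {t : x^α x_{i+1}^t ∈ I}` (ℕ-valued, junk `0` if no such `t`). -/
noncomputable def fmin {n : ℕ} (I : Set (Fin n → ℕ)) (α : Fin n → ℕ) (i : Fin n) : ℕ :=
  sInf {t | α + Pi.single i t ∈ I}

/-- `f_{i+1}(α)` valued in `ℕ∞` (equal to `⊤` when no power works). -/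
noncomputable def fminTop {n : ℕ} (I : Set (Fin n → ℕ)) (α : Fin n → ℕ) (i : Fin n) : ℕ∞ :=
  sInf ((fun t : ℕ => (t : ℕ∞)) '' {t | α + Pi.single i t ∈ I})

/-- Iterated truncated difference sequence `h^{(i)}`. -/
def hseq (h : ℕ → ℕ) : ℕ → ℕ → ℕ
  | 0, d => h d
  | _ + 1, 0 => 1
  | i + 1, e + 1 => hseq h i (e + 1) - hseq h i e

/-- The set whose infimum is `r_i(h)`. -/
def rset (h : ℕ → ℕ) (i : ℕ) : Set ℕ :=
  {d | 1 ≤ d ∧ hseq h i d ≤ hseq h i (d - 1)}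

/-- `D(h) = min {i : r_i < ∞}`. -/
noncomputable def Dval (h : ℕ → ℕ) : ℕ := sInf {i | (rset h i).Nonempty}

/-- `h` is unimodal at each tail. -/
def UnimodalAtTails (h : ℕ → ℕ) : Prop :=
  ∀ i, Dval h ≤ i → i < max 1 (h 1) →
    ∀ d, (∃ r ∈ rset h i, r ≤ d) → hseq h i d ≤ hseq h i (d - 1)

/-- The polynomial `Π (1 - z^{d_i})`. -/
noncomputable def froPoly (ds : List ℕ) : Polynomial ℤ :=
  (ds.map (fun d => 1 - Polynomial.X ^ d)).prod

/-- Coefficient of `z^i` in the power series `Π (1 - z^{d_i}) / (1-z)^n`. -/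
noncomputable def froCoeff (n : ℕ) (ds : List ℕ) (i : ℕ) : ℤ :=
  ∑ j ∈ Finset.range (i + 1),
    (froPoly ds).coeff j * (Nat.choose (n - 1 + (i - j)) (i - j) : ℤ)

/-- The Fröberg sequence `|n; d_1,…,d_m|`: the truncation `| · |` of the power
series `Π (1 - z^{d_i}) / (1-z)^n`. -/
noncomputable def fro (n : ℕ) (ds : List ℕ) (i : ℕ) : ℕ :=
  if ∀ j ≤ i, 0 < froCoeff n ds j then (froCoeff n ds i).toNat else 0


/-! ### Arithmetic core: properties of `froCoeff` and `fro` -/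

section ArithCore

open Finset Polynomial

lemma froPoly_nil : froPoly [] = 1 := by simp [froPoly]

lemma froPoly_cons (δ : ℕ) (tl : List ℕ) :
    froPoly (δ :: tl) = (1 - Polynomial.X ^ δ) * froPoly tl := by
  simp [froPoly]

lemma froPoly_coeff_zero (ds : List ℕ) (hds : ∀ d ∈ ds, 1 ≤ d) :
    (froPoly ds).coeff 0 = 1 := by
  induction ds with
  | nil => simp [froPoly_nil]
  | cons δ tl ih =>
    have hδ : 1 ≤ δ := hds δ (by simp)
    rw [froPoly_cons, Polynomial.mul_coeff_zero, ih (fun d hd => hds d (by simp [hd]))]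
    have : (Polynomial.X ^ δ : Polynomial ℤ).coeff 0 = 0 := by
      rw [Polynomial.coeff_X_pow]
      have : (0:ℕ) ≠ δ := by omega
      simp [this]
    simp [Polynomial.coeff_sub, this]

lemma froCoeff_zero (j : ℕ) (ds : List ℕ) (hds : ∀ d ∈ ds, 1 ≤ d) :
    froCoeff j ds 0 = 1 := by
  simp [froCoeff, froPoly_coeff_zero ds hds]

/-- The cons identity: `c_j[δ::tl](d) = c_j[tl](d) - c_j[tl](d-δ)`. -/
lemma froCoeff_cons (j δ : ℕ) (tl : List ℕ) (d : ℕ) :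
    froCoeff j (δ :: tl) d =
      froCoeff j tl d - (if δ ≤ d then froCoeff j tl (d - δ) else 0) := by
  unfold froCoeff
  have hco : ∀ e, (froPoly (δ :: tl)).coeff e =
      (froPoly tl).coeff e - (if δ ≤ e then (froPoly tl).coeff (e - δ) else 0) := by
    intro e
    rw [froPoly_cons, sub_mul, one_mul]
    rw [Polynomial.coeff_sub]
    congr 1
    rw [mul_comm, Polynomial.coeff_mul_X_pow']
  simp_rw [hco, sub_mul, Finset.sum_sub_distrib]
  congr 1
  by_cases hδd : δ ≤ d
  · simp only [hδd, if_true]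
    rw [show Finset.range (d + 1) = Finset.Ico 0 (d+1) by rw [Finset.range_eq_Ico]]
    rw [← Finset.sum_subset (Finset.Ico_subset_Ico (Nat.zero_le δ) (le_refl (d+1)))
        (by intro x hx hnx
            simp only [Finset.mem_Ico] at hx hnx
            have : ¬ δ ≤ x := by omega
            simp [this])]
    rw [Finset.sum_Ico_eq_sum_range]
    rw [show Finset.range (d - δ + 1) = Finset.Ico 0 (d - δ +1) by rw [Finset.range_eq_Ico]]
    rw [Finset.sum_Ico_eq_sum_range]
    apply Finset.sum_congr (by congr 1; omega)
    intro x hx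
    simp only [Finset.mem_range] at hx
    have h1 : δ ≤ δ + x := by omega
    simp only [h1, if_true]
    have e1 : δ + x - δ = 0 + x := by omega
    have e2 : d - (δ + x) = d - δ - (0 + x) := by omega
    rw [e1, e2]
  · simp only [hδd, if_false]
    rw [Finset.sum_eq_zero]
    · intro x hx
      simp only [Finset.mem_range] at hx
      have : ¬ δ ≤ x := by omega
      simp [this]

lemma froCoeff_nil (j t : ℕ) : froCoeff j [] t = (Nat.choose (j - 1 + t) t : ℤ) := by
  unfold froCoeff
  rw [froPoly_nil]
  rw [Finset.sum_eq_single 0]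
  · simp
  · intro b hb hb0
    simp [Polynomial.coeff_one, hb0]
  · intro h
    exact absurd (Finset.mem_range.mpr (by omega)) h

lemma froCoeff_nil_pos (j t : ℕ) : 0 < froCoeff j [] t := by
  rw [froCoeff_nil]
  exact_mod_cast Nat.choose_pos (by omega)

/-- Pascal recurrence between levels. -/
lemma froCoeff_succ_level (j : ℕ) (hj : 1 ≤ j) (ds : List ℕ) (d : ℕ) :
    froCoeff (j+1) ds (d+1) = froCoeff (j+1) ds d + froCoeff j ds (d+1) := by
  unfold froCoeff
  rw [Finset.sum_range_succ (n := d+1), Finset.sum_range_succ (n := d+1) (f := fun e =>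
    (froPoly ds).coeff e * (Nat.choose (j - 1 + (d + 1 - e)) (d + 1 - e) : ℤ))]
  have hlast : (froPoly ds).coeff (d+1) * (Nat.choose (j + 1 - 1 + (d + 1 - (d+1))) (d + 1 - (d+1)) : ℤ)
      = (froPoly ds).coeff (d+1) * (Nat.choose (j - 1 + (d + 1 - (d+1))) (d + 1 - (d+1)) : ℤ) := by
    simp
  rw [hlast]
  have hmain : ∀ e ∈ Finset.range (d+1),
      (froPoly ds).coeff e * (Nat.choose (j + 1 - 1 + (d + 1 - e)) (d + 1 - e) : ℤ) =
      (froPoly ds).coeff e * (Nat.choose (j + 1 - 1 + (d - e)) (d - e) : ℤ) +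
      (froPoly ds).coeff e * (Nat.choose (j - 1 + (d + 1 - e)) (d + 1 - e) : ℤ) := by
    intro e he
    simp only [Finset.mem_range] at he
    have he' : e ≤ d := by omega
    rw [← mul_add]
    congr 1
    have h2 : d + 1 - e = (d - e) + 1 := by omega
    rw [h2]
    have h5 : j + 1 - 1 + ((d - e) + 1) = (j + (d - e)) + 1 := by omega
    have h6 : j + 1 - 1 + (d - e) = j + (d - e) := by omega
    have h7 : j - 1 + ((d - e) + 1) = j + (d - e) := by omega
    rw [h5, h6, h7]
    exact_mod_cast Nat.choose_succ_succ (j + (d - e)) (d - e)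
  rw [Finset.sum_congr rfl hmain, Finset.sum_add_distrib]
  ring

/-- Partial-sum description of the next level. -/
lemma froCoeff_level_sum (j : ℕ) (hj : 1 ≤ j) (ds : List ℕ) (hds : ∀ d ∈ ds, 1 ≤ d) (d : ℕ) :
    froCoeff (j+1) ds d = ∑ e ∈ Finset.range (d+1), froCoeff j ds e := by
  induction d with
  | zero => simp [froCoeff_zero _ _ hds]
  | succ d ih =>
    rw [Finset.sum_range_succ, ← ih, froCoeff_succ_level j hj ds d]

/-- Telescoping sums between levels. -/
lemma froCoeff_telescope (j : ℕ) (hj : 1 ≤ j) (ds : List ℕ) (hds : ∀ d ∈ ds, 1 ≤ d)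
    (a b : ℕ) (hab : a ≤ b) :
    froCoeff (j+1) ds b = froCoeff (j+1) ds a + ∑ e ∈ Finset.Ico (a+1) (b+1), froCoeff j ds e := by
  rw [froCoeff_level_sum j hj ds hds, froCoeff_level_sum j hj ds hds, Finset.range_eq_Ico, Finset.range_eq_Ico]
  exact (Finset.sum_Ico_consecutive (fun e => froCoeff j ds e) (Nat.zero_le (a+1)) (by omega : a + 1 ≤ b + 1)).symm

end ArithCore

section ArithCore2

open Finset

/-- Positivity of all coefficients up to degree `d` (the truncation predicate). -/
def AliveC (ds : List ℕ) (j d : ℕ) : Prop := ∀ e ≤ d, 0 < froCoeff j ds e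

lemma fro_of_alive {n : ℕ} {ds : List ℕ} {d : ℕ} (h : AliveC ds n d) :
    fro n ds d = (froCoeff n ds d).toNat := by
  have h' : ∀ j ≤ d, 0 < froCoeff n ds j := h
  simp only [fro]
  rw [if_pos h']

lemma fro_of_not_alive {n : ℕ} {ds : List ℕ} {d : ℕ} (h : ¬ AliveC ds n d) :
    fro n ds d = 0 := by
  have h' : ¬ ∀ j ≤ d, 0 < froCoeff n ds j := h
  simp only [fro]
  rw [if_neg h']

lemma fro_pos_of_alive {n : ℕ} {ds : List ℕ} {d : ℕ} (h : AliveC ds n d) :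
    0 < fro n ds d := by
  rw [fro_of_alive h]
  have := h d le_rfl
  omega

lemma fro_eq_zero_iff {n : ℕ} {ds : List ℕ} {d : ℕ} :
    fro n ds d = 0 ↔ ¬ AliveC ds n d := by
  constructor
  · intro h hA
    have := fro_pos_of_alive hA
    omega
  · exact fro_of_not_alive

lemma aliveC_mono {ds : List ℕ} {j d e : ℕ} (h : AliveC ds j d) (he : e ≤ d) :
    AliveC ds j e := fun e' he' => h e' (le_trans he' he)

lemma fro_zero_succ {n : ℕ} {ds : List ℕ} {d : ℕ} (h : fro n ds d = 0) :
    fro n ds (d+1) = 0 := by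
  rw [fro_eq_zero_iff] at h ⊢
  intro hA
  exact h (aliveC_mono hA (by omega))

lemma aliveC_succ_level {ds : List ℕ} (hds : ∀ d ∈ ds, 1 ≤ d) {j d : ℕ} (hj : 1 ≤ j)
    (h : AliveC ds j d) : AliveC ds (j+1) d := by
  intro e he
  rw [froCoeff_level_sum j hj ds hds]
  apply Finset.sum_pos
  · intro e' he'
    simp only [Finset.mem_range] at he'
    exact h e' (by omega)
  · exact ⟨0, Finset.mem_range.mpr (by omega)⟩

lemma fro_d0 {n : ℕ} {ds : List ℕ} (hds : ∀ d ∈ ds, 1 ≤ d) : fro n ds 0 = 1 := by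
  have hA : AliveC ds n 0 := by
    intro e he
    have : e = 0 := by omega
    rw [this, froCoeff_zero n ds hds]
    omega
  rw [fro_of_alive hA, froCoeff_zero n ds hds]
  rfl

/-- Level-1 coefficients are `1` below all the degrees. -/
lemma froCoeff_one_eq_one {ds : List ℕ} (hds : ∀ d ∈ ds, 1 ≤ d) {d : ℕ}
    (h : ∀ i ∈ ds, d < i) : froCoeff 1 ds d = 1 := by
  induction ds with
  | nil =>
    rw [froCoeff_nil]
    norm_num
  | cons δ tl ih =>
    have hδ : d < δ := h δ (by simp)
    rw [froCoeff_cons]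
    rw [if_neg (by omega)]
    rw [ih (fun i hi => hds i (by simp [hi])) (fun i hi => h i (by simp [hi]))]
    ring

/-- Level-1 coefficient is nonpositive at the minimal degree. -/
lemma froCoeff_one_min {ds : List ℕ} (hds : ∀ d ∈ ds, 1 ≤ d) {μ : ℕ}
    (hμ : μ ∈ ds) (hmin : ∀ i ∈ ds, μ ≤ i) : froCoeff 1 ds μ ≤ 0 := by
  induction ds with
  | nil => simp at hμ
  | cons δ tl ih =>
    have hds' : ∀ d ∈ tl, 1 ≤ d := fun d hd => hds d (by simp [hd])
    rw [froCoeff_cons]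
    by_cases hδμ : δ ≤ μ
    · have hμδ : μ = δ := le_antisymm (hmin δ (by simp)) hδμ
      subst hμδ
      rw [if_pos le_rfl, Nat.sub_self, froCoeff_zero 1 tl hds']
      by_cases hμtl : μ ∈ tl
      · have := ih hds' hμtl (fun i hi => hmin i (by simp [hi]))
        omega
      · have hgt : ∀ i ∈ tl, μ < i := by
          intro i hi
          rcases Nat.lt_or_ge μ i with h' | h'
          · exact h'
          · have := hmin i (by simp [hi])
            have : μ = i := by omega
            subst this
            exact absurd hi hμtl
        rw [froCoeff_one_eq_one hds' hgt]
        omega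
    · have hμtl : μ ∈ tl := by
        rcases List.mem_cons.mp hμ with h' | h'
        · omega
        · exact h'
      have := ih hds' hμtl (fun i hi => hmin i (by simp [hi]))
      rw [if_neg hδμ]
      omega

/-- If some `dᵢ ≤ d` then level 1 is not alive at `d`. -/
lemma not_aliveC_one {ds : List ℕ} (hds : ∀ d ∈ ds, 1 ≤ d) {d : ℕ} {i₀ : ℕ}
    (hi₀ : i₀ ∈ ds) (hle : i₀ ≤ d) : ¬ AliveC ds 1 d := by
  -- take the minimum of ds
  have hne : ds ≠ [] := by intro h; subst h; simp at hi₀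
  obtain ⟨μ, hμmem, hμmin⟩ : ∃ μ ∈ ds, ∀ i ∈ ds, μ ≤ i := by
    clear hds hi₀ hle
    induction ds with
    | nil => simp at hne
    | cons δ tl ih =>
      rcases List.eq_nil_or_concat tl with h' | _
      case inl =>
        subst h'
        exact ⟨δ, by simp, by simp⟩
      all_goals {
        by_cases htl : tl = []
        · subst htl
          exact ⟨δ, by simp, by simp⟩
        · obtain ⟨μ, hm, hmin⟩ := ih htl
          by_cases hc : δ ≤ μ
          · exact ⟨δ, by simp, by
              intro i hi
              rcases List.mem_cons.mp hi with h | h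
              · omega
              · exact le_trans hc (hmin i h)⟩
          · exact ⟨μ, by simp [hm], by
              intro i hi
              rcases List.mem_cons.mp hi with h | h
              · omega
              · exact hmin i h⟩ }
  intro hA
  have h1 := hA μ (le_trans (hμmin i₀ hi₀) hle)
  have h2 := froCoeff_one_min hds hμmem hμmin
  omega

lemma aliveC_one_iff {ds : List ℕ} (hds : ∀ d ∈ ds, 1 ≤ d) {d : ℕ} :
    AliveC ds 1 d ↔ ∀ i ∈ ds, d < i := by
  constructor
  · intro hA i hi
    by_contra h
    exact not_aliveC_one hds hi (by omega) hA
  · intro h e he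
    rw [froCoeff_one_eq_one hds (fun i hi => by have := h i hi; omega)]
    omega

lemma fro_one_le {ds : List ℕ} (hds : ∀ d ∈ ds, 1 ≤ d) (d : ℕ) :
    fro 1 ds (d+1) ≤ fro 1 ds d := by
  by_cases hA : AliveC ds 1 (d+1)
  · have hA' : AliveC ds 1 d := aliveC_mono hA (by omega)
    rw [fro_of_alive hA, fro_of_alive hA']
    rw [froCoeff_one_eq_one hds ((aliveC_one_iff hds).mp hA' )]
    rw [froCoeff_one_eq_one hds (fun i hi => ((aliveC_one_iff hds).mp hA) i hi)]
  · rw [fro_of_not_alive hA]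
    omega

/-- In a cons list, aliveness passes to the tail. -/
lemma aliveC_tail {δ : ℕ} {tl : List ℕ} (hδ : 1 ≤ δ) {j t : ℕ}
    (h : AliveC (δ :: tl) j t) : AliveC tl j t := by
  intro e he
  induction e using Nat.strong_induction_on with
  | _ e ih =>
    have hc := froCoeff_cons j δ tl e
    by_cases hδe : δ ≤ e
    · rw [if_pos hδe] at hc
      have h1 := h e he
      have h2 : 0 < froCoeff j tl (e - δ) := ih (e - δ) (by omega) (by omega)
      omega
    · rw [if_neg hδe] at hc
      have h1 := h e he
      omega

/-- THE KEY LEMMA: if level `j` has died by time `t` but level `j+1` is still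
alive at `t`, then the level-`j` coefficient at `t` is nonpositive. -/
theorem KL {ds : List ℕ} (hds : ∀ d ∈ ds, 1 ≤ d) :
    ∀ j, 1 ≤ j → ∀ t, ¬ AliveC ds j t → AliveC ds (j+1) t → froCoeff j ds t ≤ 0 := by
  induction ds with
  | nil =>
    intro j hj t hdead _
    exact absurd (fun e _ => froCoeff_nil_pos j e) hdead
  | cons δ tl IH =>
    intro j hj t hdead halive
    have hδ : 1 ≤ δ := hds δ (by simp)
    have hds' : ∀ d ∈ tl, 1 ≤ d := fun d hd => hds d (by simp [hd])
    have halive' : AliveC tl (j+1) t := aliveC_tail hδ halive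
    -- unpack death witness
    rw [AliveC] at hdead
    push_neg at hdead
    obtain ⟨e₀, he₀t, hdip⟩ := hdead
    by_cases hAj : AliveC tl j t
    · -- Case B: tail still alive at level j
      have hδe₀ : δ ≤ e₀ := by
        by_contra hc
        rw [froCoeff_cons, if_neg hc] at hdip
        have := hAj e₀ he₀t
        omega
      have hdip' : froCoeff j tl e₀ ≤ froCoeff j tl (e₀ - δ) := by
        rw [froCoeff_cons, if_pos hδe₀] at hdip
        omega
      have hδt : δ ≤ t := le_trans hδe₀ he₀t
      rw [froCoeff_cons, if_pos hδt]
      rcases Nat.lt_or_ge j 2 with hj1 | hj2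
      · -- j = 1 : explicit
        have hj1' : j = 1 := by omega
        subst hj1'
        have hlt : ∀ i ∈ tl, t < i := (aliveC_one_iff hds').mp hAj
        rw [froCoeff_one_eq_one hds' hlt,
          froCoeff_one_eq_one hds' (fun i hi => by have := hlt i hi; omega)]
        omega
      · -- j ≥ 2
        have hjm : j - 1 + 1 = j := by omega
        have hjm1 : 1 ≤ j - 1 := by omega
        have hsub : ¬ AliveC tl (j-1) e₀ := by
          intro hAl
          have htel := froCoeff_telescope (j-1) hjm1 tl hds' (e₀ - δ) e₀ (by omega)
          rw [hjm] at htel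
          have hpos : 0 < ∑ e ∈ Finset.Ico (e₀ - δ + 1) (e₀ + 1), froCoeff (j-1) tl e := by
            apply Finset.sum_pos
            · intro e he
              simp only [Finset.mem_Ico] at he
              exact hAl e (by omega)
            · exact ⟨e₀, by simp only [Finset.mem_Ico]; omega⟩
          omega
        obtain ⟨w, hwe₀, hwdip⟩ : ∃ w ≤ e₀, froCoeff (j-1) tl w ≤ 0 := by
          rw [AliveC] at hsub; push_neg at hsub
          obtain ⟨w, h1, h2⟩ := hsub
          exact ⟨w, h1, by omega⟩
        by_cases hAv : AliveC tl (j-1) (t - δ)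
        · -- chain through e₀
          have h1 : froCoeff j tl t ≤ froCoeff j tl e₀ := by
            have htel := froCoeff_telescope (j-1) hjm1 tl hds' e₀ t he₀t
            rw [hjm] at htel
            have hneg : ∑ e ∈ Finset.Ico (e₀ + 1) (t + 1), froCoeff (j-1) tl e ≤ 0 := by
              apply Finset.sum_nonpos
              intro e he
              simp only [Finset.mem_Ico] at he
              exact IH hds' (j-1) hjm1 e
                (by intro hc; exact absurd (hc w (by omega)) (by omega))
                (by rw [hjm]; exact aliveC_mono hAj (by omega))
            omega
          have h2 : froCoeff j tl (e₀ - δ) ≤ froCoeff j tl (t - δ) := by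
            have htel := froCoeff_telescope (j-1) hjm1 tl hds' (e₀ - δ) (t - δ) (by omega)
            rw [hjm] at htel
            have hpos : 0 ≤ ∑ e ∈ Finset.Ico (e₀ - δ + 1) (t - δ + 1), froCoeff (j-1) tl e := by
              apply Finset.sum_nonneg
              intro e he
              simp only [Finset.mem_Ico] at he
              have := hAv e (by omega)
              omega
            omega
          omega
        · -- direct decrease from t-δ to t
          have htel := froCoeff_telescope (j-1) hjm1 tl hds' (t - δ) t (by omega)
          rw [hjm] at htel
          obtain ⟨w', hw', hw'dip⟩ : ∃ w' ≤ t - δ, froCoeff (j-1) tl w' ≤ 0 := by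
            rw [AliveC] at hAv; push_neg at hAv
            obtain ⟨w', h1, h2⟩ := hAv
            exact ⟨w', h1, by omega⟩
          have hneg : ∑ e ∈ Finset.Ico (t - δ + 1) (t + 1), froCoeff (j-1) tl e ≤ 0 := by
            apply Finset.sum_nonpos
            intro e he
            simp only [Finset.mem_Ico] at he
            exact IH hds' (j-1) hjm1 e
              (by intro hc; exact absurd (hc w' (by omega)) (by omega))
              (by rw [hjm]; exact aliveC_mono hAj (by omega))
          omega
    · -- Case A: tail has died at level j by time t
      have hCjt : froCoeff j tl t ≤ 0 := IH hds' j hj t hAj halive'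
      rw [froCoeff_cons]
      by_cases hδt : δ ≤ t
      · rw [if_pos hδt]
        by_cases hAv : AliveC tl j (t - δ)
        · have := hAv (t - δ) le_rfl
          omega
        · exfalso
          obtain ⟨w, hwv, hwdip⟩ : ∃ w ≤ t - δ, froCoeff j tl w ≤ 0 := by
            rw [AliveC] at hAv; push_neg at hAv
            obtain ⟨w, h1, h2⟩ := hAv
            exact ⟨w, h1, by omega⟩
          have hkey : froCoeff (j+1) (δ :: tl) (w + δ) ≤ 0 := by
            rw [froCoeff_cons, if_pos (by omega)]
            have hww : w + δ - δ = w := by omega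
            rw [hww]
            have htel := froCoeff_telescope j hj tl hds' w (w + δ) (by omega)
            have hneg : ∑ e ∈ Finset.Ico (w + 1) (w + δ + 1), froCoeff j tl e ≤ 0 := by
              apply Finset.sum_nonpos
              intro e he
              simp only [Finset.mem_Ico] at he
              exact IH hds' j hj e
                (by intro hc; exact absurd (hc w (by omega)) (by omega))
                (aliveC_mono halive' (by omega))
            omega
          have := halive (w + δ) (by omega)
          omega
      · rw [if_neg hδt]
        omega

end ArithCore2

section ArithCore3

open Finset

variable {ds : List ℕ}

/-- The fundamental difference identity `E'`. -/
theorem fro_diff (hds : ∀ d ∈ ds, 1 ≤ d) {j : ℕ} (hj : 1 ≤ j) (d : ℕ) :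
    fro j ds (d+1) = fro (j+1) ds (d+1) - fro (j+1) ds d := by
  by_cases hAj : AliveC ds j (d+1)
  · have hAj1 : AliveC ds (j+1) (d+1) := aliveC_succ_level hds hj hAj
    rw [fro_of_alive hAj, fro_of_alive hAj1, fro_of_alive (aliveC_mono hAj1 (by omega))]
    have hrec := froCoeff_succ_level j hj ds d
    have h1 := hAj (d+1) le_rfl
    have h2 := hAj1 (d+1) le_rfl
    have h3 := hAj1 d (by omega)
    omega
  · rw [fro_of_not_alive hAj]
    by_cases hAj1 : AliveC ds (j+1) (d+1)
    · have hKL := KL hds j hj (d+1) hAj hAj1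
      have hrec := froCoeff_succ_level j hj ds d
      rw [fro_of_alive hAj1, fro_of_alive (aliveC_mono hAj1 (by omega))]
      omega
    · rw [fro_of_not_alive hAj1]
      omega

/-- Feasibility: the next value is at most the sum of all lower-level values. -/
theorem fro_feas (hds : ∀ d ∈ ds, 1 ≤ d) {j : ℕ} (hj : 1 ≤ j) (d : ℕ) :
    fro j ds (d+1) ≤ ∑ i ∈ Finset.Icc 1 j, fro i ds d := by
  induction j with
  | zero => omega
  | succ j ih =>
    by_cases hj0 : j = 0
    · subst hj0
      simp only [Finset.Icc_self, Finset.sum_singleton]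
      exact fro_one_le hds d
    · have hj1 : 1 ≤ j := by omega
      have hE := fro_diff hds hj1 d
      have hsum : ∑ i ∈ Finset.Icc 1 (j+1), fro i ds d
          = fro (j+1) ds d + ∑ i ∈ Finset.Icc 1 j, fro i ds d := by
        have hins : Finset.Icc 1 (j+1) = insert (j+1) (Finset.Icc 1 j) := by
          ext x
          simp only [Finset.mem_Icc, Finset.mem_insert]
          omega
        rw [hins, Finset.sum_insert (by simp only [Finset.mem_Icc]; omega)]
      rw [hsum]
      have := ih hj1
      omega

/-- Iterated difference identity. -/
theorem fro_iter (hds : ∀ d ∈ ds, 1 ≤ d) {l : ℕ} (hl : 1 ≤ l) :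
    ∀ k j, j + k = l → 1 ≤ j → ∀ d,
      fro j ds (d+1) = fro l ds (d+1) - ∑ i ∈ Finset.Icc (j+1) l, fro i ds d := by
  intro k
  induction k with
  | zero =>
    intro j hj hj1 d
    have : j = l := by omega
    subst this
    rw [Finset.Icc_eq_empty (by omega)]
    simp
  | succ k ih =>
    intro j hj hj1 d
    have hjl : j + 1 ≤ l := by omega
    have hE := fro_diff hds hj1 d
    have hIH := ih (j+1) (by omega) (by omega) d
    have hicc : Finset.Icc (j+1+1) l = Finset.Icc (j+2) l := by norm_num
    rw [hicc] at hIH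
    have hsum : ∑ i ∈ Finset.Icc (j+1) l, fro i ds d
        = fro (j+1) ds d + ∑ i ∈ Finset.Icc (j+2) l, fro i ds d := by
      have hins : Finset.Icc (j+1) l = insert (j+1) (Finset.Icc (j+2) l) := by
        ext x
        simp only [Finset.mem_Icc, Finset.mem_insert]
        omega
      rw [hins, Finset.sum_insert (by simp only [Finset.mem_Icc]; omega)]
    rw [hsum, hE, hIH]
    omega

/-- Dip persistence: once a level weakly decreases, it stays weakly decreasing. -/
theorem fro_persist (hds : ∀ d ∈ ds, 1 ≤ d) {j : ℕ} (hj : 1 ≤ j) {r : ℕ} (hr : 1 ≤ r)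
    (hdip : fro j ds r ≤ fro j ds (r-1)) :
    ∀ d, r ≤ d → fro j ds d ≤ fro j ds (d-1) := by
  intro d hrd
  induction d, hrd using Nat.le_induction with
  | base => exact hdip
  | succ d hd ih =>
    have hd1 : 1 ≤ d := by omega
    have ihd : fro j ds d ≤ fro j ds (d-1) := ih
    simp only [Nat.add_sub_cancel]
    by_cases hz : fro j ds (d+1) = 0
    · omega
    · rcases Nat.lt_or_ge j 2 with hj1 | hj2
      · have : j = 1 := by omega
        subst this
        exact fro_one_le hds d
      · have hjm : j - 1 + 1 = j := by omega
        have hjm1 : 1 ≤ j - 1 := by omega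
        -- E' at d : fro (j-1) ds d = fro j ds d - fro j ds (d-1) = 0
        have hE1 := fro_diff hds hjm1 (d-1)
        rw [show d - 1 + 1 = d by omega, hjm] at hE1
        have hlow : fro (j-1) ds d = 0 := by omega
        have hlow1 : fro (j-1) ds (d+1) = 0 := fro_zero_succ hlow
        have hE2 := fro_diff hds hjm1 d
        rw [hjm] at hE2
        omega

end ArithCore3

section ArithCore4

open Finset

variable {ds : List ℕ}

lemma froPoly_cons_coeff (δ : ℕ) (tl : List ℕ) (e : ℕ) :
    (froPoly (δ :: tl)).coeff e =
      (froPoly tl).coeff e - (if δ ≤ e then (froPoly tl).coeff (e - δ) else 0) := by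
  rw [froPoly_cons, sub_mul, one_mul, Polynomial.coeff_sub]
  congr 1
  rw [mul_comm, Polynomial.coeff_mul_X_pow']

lemma froPoly_coeff_one (hds : ∀ d ∈ ds, 1 ≤ d) : (froPoly ds).coeff 1 ≤ 0 := by
  induction ds with
  | nil => simp [froPoly_nil, Polynomial.coeff_one]
  | cons δ tl ih =>
    have hδ : 1 ≤ δ := hds δ (by simp)
    have hds' : ∀ d ∈ tl, 1 ≤ d := fun d hd => hds d (by simp [hd])
    rw [froPoly_cons_coeff]
    by_cases hδ1 : δ ≤ 1
    · have : δ = 1 := by omega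
      subst this
      rw [if_pos le_rfl]
      simp only [Nat.sub_self]
      rw [froPoly_coeff_zero tl hds']
      have := ih hds'
      omega
    · rw [if_neg hδ1]
      have := ih hds'
      omega

lemma froCoeff_d1 (n : ℕ) (hds : ∀ d ∈ ds, 1 ≤ d) :
    froCoeff n ds 1 = (max n 1 : ℤ) + (froPoly ds).coeff 1 := by
  unfold froCoeff
  rw [show (1:ℕ) + 1 = 2 by rfl, Finset.sum_range_succ, Finset.sum_range_one]
  rw [froPoly_coeff_zero ds hds]
  have h1 : n - 1 + (1 - 0) = n - 1 + 1 := by omega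
  have h2 : (n - 1 + 1).choose 1 = n - 1 + 1 := Nat.choose_one_right _
  have h3 : n - 1 + 1 = max n 1 := by omega
  simp only [Nat.sub_self, Nat.choose_zero_right]
  rw [h1, h2, h3]
  push_cast
  ring

lemma fro_d1_le (n : ℕ) (hds : ∀ d ∈ ds, 1 ≤ d) : fro n ds 1 ≤ max n 1 := by
  by_cases hA : AliveC ds n 1
  · rw [fro_of_alive hA, froCoeff_d1 n hds]
    have := froPoly_coeff_one hds
    omega
  · rw [fro_of_not_alive hA]
    omega

lemma fro_max_eq (n : ℕ) (d : ℕ) : fro n ds d = fro (max n 1) ds d := by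
  rcases Nat.lt_or_ge n 1 with h | h
  · have hn : n = 0 := by omega
    subst hn
    have hco : ∀ i, froCoeff 0 ds i = froCoeff 1 ds i := by
      intro i
      unfold froCoeff
      apply Finset.sum_congr rfl
      intro j _
      norm_num
    simp only [fro, hco]
    rfl
  · rw [Nat.max_eq_left h]

/-- The iterated truncated differences of a Fröberg sequence are the
Fröberg sequences with fewer variables. -/
lemma hseq_fro (n : ℕ) (hds : ∀ d ∈ ds, 1 ≤ d) :
    ∀ i, i + 1 ≤ max n 1 → ∀ d, hseq (fro n ds) i d = fro (max n 1 - i) ds d := by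
  set l := max n 1 with hl
  intro i
  induction i with
  | zero =>
    intro _ d
    simp only [Nat.sub_zero]
    show fro n ds d = fro l ds d
    exact fro_max_eq n d
  | succ i ih =>
    intro hi1 d
    cases d with
    | zero =>
      show (1:ℕ) = fro (l - (i+1)) ds 0
      rw [fro_d0 hds]
    | succ e =>
      show hseq (fro n ds) i (e+1) - hseq (fro n ds) i e = fro (l - (i+1)) ds (e+1)
      rw [ih (by omega) (e+1), ih (by omega) e]
      have hj : 1 ≤ l - i - 1 := by omega
      have hE := fro_diff hds hj e
      rw [show l - i - 1 + 1 = l - i by omega] at hE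
      rw [show l - (i+1) = l - i - 1 by omega]
      omega

/-- The unimodality-at-tails part of the theorem. -/
theorem fro_unimodal (n : ℕ) (hds : ∀ d ∈ ds, 1 ≤ d) : UnimodalAtTails (fro n ds) := by
  intro i _ hi d hr
  obtain ⟨r, hrmem, hrd⟩ := hr
  obtain ⟨hr1, hrdip⟩ := hrmem
  have hl1 : 1 ≤ max n 1 := by omega
  have hile : i + 1 ≤ max n 1 := by
    have := fro_d1_le n hds
    have : max 1 (fro n ds 1) ≤ max n 1 := by omega
    omega
  rw [hseq_fro n hds i hile] at hrdip ⊢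
  rw [hseq_fro n hds i hile] at hrdip ⊢
  exact fro_persist hds (by omega : 1 ≤ max n 1 - i) hr1 hrdip d hrd

end ArithCore4

/-! ### The degree reverse lexicographic order -/

section Order

variable {l : ℕ}

lemma mdeg_add_single (w : Fin l → ℕ) (k : Fin l) (c : ℕ) :
    mdeg (w + Pi.single k c) = mdeg w + c := by
  unfold mdeg
  simp only [Pi.add_apply]
  rw [Finset.sum_add_distrib]
  congr 1
  simp [Pi.single_apply]

lemma rgt_of_move {w : Fin l → ℕ} {i k : Fin l} (hik : i < k) :
    RevLexGT (w + Pi.single i 1) (w + Pi.single k 1) := by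
  right
  constructor
  · rw [mdeg_add_single, mdeg_add_single]
  · refine ⟨k, fun t ht => ?_, ?_⟩
    · simp only [Pi.add_apply, Pi.single_apply]
      have h1 : t ≠ i := by intro h; subst h; exact absurd (lt_trans hik ht) (lt_irrefl _)
      have h2 : t ≠ k := ne_of_gt ht
      simp [h1, h2]
    · simp only [Pi.add_apply, Pi.single_apply]
      have h1 : k ≠ i := ne_of_gt hik
      simp [h1]

lemma rgt_same_deg {M N : Fin l → ℕ} (hdeg : mdeg M = mdeg N) (h : RevLexGT M N) :
    ∃ s : Fin l, (∀ i : Fin l, s < i → M i = N i) ∧ M s < N s := by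
  rcases h with h | h
  · omega
  · exact h.2

lemma rgt_asymm {M N : Fin l → ℕ} (hdeg : mdeg M = mdeg N)
    (h1 : RevLexGT M N) (h2 : RevLexGT N M) : False := by
  obtain ⟨s1, he1, hl1⟩ := rgt_same_deg hdeg h1
  obtain ⟨s2, he2, hl2⟩ := rgt_same_deg hdeg.symm h2
  rcases lt_trichotomy s1 s2 with h | h | h
  · have := he1 s2 h
    omega
  · subst h
    omega
  · have := he2 s1 h
    omega

lemma rgt_trans {M N P : Fin l → ℕ} (h1 : mdeg M = mdeg N) (h2 : mdeg N = mdeg P)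
    (hMN : RevLexGT M N) (hNP : RevLexGT N P) : RevLexGT M P := by
  obtain ⟨s1, he1, hl1⟩ := rgt_same_deg h1 hMN
  obtain ⟨s2, he2, hl2⟩ := rgt_same_deg h2 hNP
  right
  refine ⟨h1.trans h2, ?_⟩
  rcases lt_trichotomy s1 s2 with h | h | h
  · exact ⟨s2, fun t ht => (he1 t (lt_trans h ht)).trans (he2 t ht), by
      have := he1 s2 h; omega⟩
  · subst h
    exact ⟨s1, fun t ht => (he1 t ht).trans (he2 t ht), by omega⟩
  · exact ⟨s1, fun t ht => (he1 t ht).trans (he2 t (lt_trans h ht)), by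
      have := he2 s1 h; omega⟩

lemma rgt_trichotomy (M N : Fin l → ℕ) (hdeg : mdeg M = mdeg N) :
    M = N ∨ RevLexGT M N ∨ RevLexGT N M := by
  by_cases heq : M = N
  · exact Or.inl heq
  · have hne : (Finset.univ.filter (fun i : Fin l => M i ≠ N i)).Nonempty := by
      by_contra hc
      rw [Finset.not_nonempty_iff_eq_empty] at hc
      apply heq
      funext i
      by_contra hi
      have : i ∈ Finset.univ.filter (fun i : Fin l => M i ≠ N i) := by
        simp [hi]
      rw [hc] at this
      simp at this
    set s := (Finset.univ.filter (fun i : Fin l => M i ≠ N i)).max' hne with hs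
    have hsmem : s ∈ Finset.univ.filter (fun i : Fin l => M i ≠ N i) :=
      Finset.max'_mem _ hne
    have hsne : M s ≠ N s := by
      simp only [Finset.mem_filter] at hsmem
      exact hsmem.2
    have htail : ∀ i : Fin l, s < i → M i = N i := by
      intro i hi
      by_contra hc
      have : i ∈ Finset.univ.filter (fun i : Fin l => M i ≠ N i) := by simp [hc]
      have := Finset.le_max' _ i this
      omega
    rcases Nat.lt_or_ge (M s) (N s) with h | h
    · exact Or.inr (Or.inl (Or.inr ⟨hdeg, s, htail, h⟩))
    · have : N s < M s := by omega
      exact Or.inr (Or.inr (Or.inr ⟨hdeg.symm, s, fun i hi => (htail i hi).symm, this⟩))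

end Order

/-! ### Bottom segments of a finite set of same-degree monomials -/

section Seg

variable {l : ℕ}

/-- Number of elements of `S` that are `≤ m` in revlex. -/
noncomputable def rankIn (S : Finset (Fin l → ℕ)) (m : Fin l → ℕ) : ℕ :=
  (S.filter (fun m' => m' = m ∨ RevLexGT m m')).card

/-- The bottom segment: elements of rank at most `s`. -/
noncomputable def belowSeg (S : Finset (Fin l → ℕ)) (s : ℕ) : Finset (Fin l → ℕ) :=
  S.filter (fun m => rankIn S m ≤ s)

lemma belowSeg_subset (S : Finset (Fin l → ℕ)) (s : ℕ) : belowSeg S s ⊆ S :=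
  Finset.filter_subset _ _

lemma mem_belowSeg {S : Finset (Fin l → ℕ)} {s : ℕ} {m : Fin l → ℕ} :
    m ∈ belowSeg S s ↔ m ∈ S ∧ rankIn S m ≤ s := Finset.mem_filter

variable {S : Finset (Fin l → ℕ)} {d : ℕ} (hS : ∀ m ∈ S, mdeg m = d)

lemma exists_top' (d : ℕ) : ∀ (S : Finset (Fin l → ℕ)), (∀ m ∈ S, mdeg m = d) → S.Nonempty →
    ∃ M ∈ S, ∀ m ∈ S, m ≠ M → RevLexGT M m := by
  classical
  intro S
  induction S using Finset.induction_on with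
  | empty => intro _ hne; simp at hne
  | @insert a S0 ha ih =>
    intro hS _
    by_cases hS0 : S0.Nonempty
    · obtain ⟨M', hM'mem, hM'top⟩ := ih (fun m hm => hS m (Finset.mem_insert_of_mem hm)) hS0
      have hda : mdeg a = d := hS a (Finset.mem_insert_self _ _)
      have hdM' : mdeg M' = d := hS M' (Finset.mem_insert_of_mem hM'mem)
      rcases rgt_trichotomy a M' (by omega) with h | h | h
      · subst h
        exact absurd hM'mem ha
      · refine ⟨a, Finset.mem_insert_self _ _, fun m hm hne' => ?_⟩
        rcases Finset.mem_insert.mp hm with h' | h'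
        · exact absurd h' hne'
        · by_cases hmM' : m = M'
          · subst hmM'
            exact h
          · exact rgt_trans (M := a) (N := M') (by omega)
              (by rw [hdM', hS m (Finset.mem_insert_of_mem h')]) h (hM'top m h' hmM')
      · refine ⟨M', Finset.mem_insert_of_mem hM'mem, fun m hm hne' => ?_⟩
        rcases Finset.mem_insert.mp hm with h' | h'
        · subst h'
          exact h
        · exact hM'top m h' hne'
    · rw [Finset.not_nonempty_iff_eq_empty] at hS0
      subst hS0
      refine ⟨a, Finset.mem_insert_self _ _, fun m hm hne' => ?_⟩
      rcases Finset.mem_insert.mp hm with h' | h'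
      · exact absurd h' hne'
      · simp at h'

include hS in
lemma exists_top (hne : S.Nonempty) :
    ∃ M ∈ S, ∀ m ∈ S, m ≠ M → RevLexGT M m := exists_top' d S hS hne

include hS in
lemma rankIn_le_of_below {m m'' : Fin l → ℕ} (hm : m ∈ S) (hm'' : m'' ∈ S)
    (h : m'' = m ∨ RevLexGT m m'') : rankIn S m'' ≤ rankIn S m := by
  apply Finset.card_le_card
  intro z hz
  rw [Finset.mem_filter] at hz ⊢
  refine ⟨hz.1, ?_⟩
  rcases hz.2 with h1 | h1
  · subst h1
    exact h
  · rcases h with h2 | h2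
    · subst h2
      exact Or.inr h1
    · exact Or.inr (rgt_trans (by rw [hS m hm, hS m'' hm'']) (by rw [hS m'' hm'', hS z hz.1]) h2 h1)

include hS in
lemma belowSeg_down {s : ℕ} {m m' : Fin l → ℕ} (hm : m ∈ belowSeg S s) (hm' : m' ∈ S)
    (h : RevLexGT m m') : m' ∈ belowSeg S s := by
  rw [mem_belowSeg] at hm ⊢
  exact ⟨hm', le_trans (rankIn_le_of_below hS hm.1 hm' (Or.inr h)) hm.2⟩

include hS in
lemma belowSeg_sep {s : ℕ} {N b : Fin l → ℕ} (hN : N ∈ S) (hNb : N ∉ belowSeg S s)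
    (hb : b ∈ belowSeg S s) : RevLexGT N b := by
  have hbS : b ∈ S := belowSeg_subset S s hb
  rcases rgt_trichotomy N b (by rw [hS N hN, hS b hbS]) with h | h | h
  · subst h
    exact absurd hb hNb
  · exact h
  · exfalso
    apply hNb
    rw [mem_belowSeg] at hb ⊢
    exact ⟨hN, le_trans (rankIn_le_of_below hS hbS hN (Or.inr h)) hb.2⟩

lemma card_belowSeg' (d : ℕ) : ∀ (n : ℕ) (S : Finset (Fin l → ℕ)), S.card = n →
    (∀ m ∈ S, mdeg m = d) → ∀ s, (belowSeg S s).card = min s S.card := by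
  classical
  intro n
  induction n using Nat.strong_induction_on with
  | _ n ih =>
    intro S hn hS s
    by_cases hle : S.card ≤ s
    · have : belowSeg S s = S := by
        apply Finset.filter_true_of_mem
        intro m hm
        exact le_trans (Finset.card_le_card (Finset.filter_subset _ _)) hle
      rw [this]
      omega
    · have hne : S.Nonempty := by
        rw [← Finset.card_pos]
        omega
      obtain ⟨M, hMmem, hMtop⟩ := exists_top hS hne
      have hrankM : rankIn S M = S.card := by
        unfold rankIn
        congr 1
        apply Finset.filter_true_of_mem
        intro z hz
        by_cases hzM : z = M
        · exact Or.inl hzM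
        · exact Or.inr (hMtop z hz hzM)
      have hMnot : M ∉ belowSeg S s := by
        rw [mem_belowSeg]
        intro hc
        omega
      have hrank_erase : ∀ m ∈ S.erase M, rankIn (S.erase M) m = rankIn S m := by
        intro m hm
        unfold rankIn
        rw [Finset.filter_erase]
        rw [Finset.erase_eq_of_notMem]
        intro hc
        rw [Finset.mem_filter] at hc
        rcases hc.2 with h | h
        · subst h
          exact absurd hm (Finset.notMem_erase _ _)
        · have hmS : m ∈ S := Finset.mem_of_mem_erase hm
          have hmne : m ≠ M := Finset.ne_of_mem_erase hm
          exact rgt_asymm (by rw [hS m hmS, hS M hMmem]) h (hMtop m hmS hmne)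
      have hseg_eq : belowSeg S s = belowSeg (S.erase M) s := by
        ext m
        rw [mem_belowSeg, mem_belowSeg]
        constructor
        · intro ⟨h1, h2⟩
          have hmne : m ≠ M := by
            intro hc
            subst hc
            omega
          have hm' : m ∈ S.erase M := Finset.mem_erase.mpr ⟨hmne, h1⟩
          rw [hrank_erase m hm']
          exact ⟨hm', h2⟩
        · intro ⟨h1, h2⟩
          rw [hrank_erase m h1] at h2
          exact ⟨Finset.mem_of_mem_erase h1, h2⟩
      rw [hseg_eq]
      have hcard : (S.erase M).card = S.card - 1 := by
        rw [Finset.card_erase_of_mem hMmem]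
      have hlt : S.card - 1 < n := by
        have h0 : 0 < S.card := Finset.card_pos.mpr hne
        omega
      rw [ih (S.card - 1) hlt (S.erase M) hcard
        (fun m hm => hS m (Finset.mem_of_mem_erase hm)) s]
      omega

include hS in
lemma card_belowSeg (s : ℕ) : (belowSeg S s).card = min s S.card :=
  card_belowSeg' d S.card S rfl hS s

include hS in
lemma card_belowSeg_filter (s : ℕ) (Q : (Fin l → ℕ) → Prop) [DecidablePred Q]
    (hQ : ∀ a ∈ S, ∀ b ∈ S, Q a → RevLexGT b a → Q b) :
    ((belowSeg S s).filter Q).card = min s S.card - min s (S.filter (fun a => ¬ Q a)).card := by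
  classical
  set S₀ := S.filter (fun a => ¬ Q a) with hS₀
  have hS₀deg : ∀ m ∈ S₀, mdeg m = d := fun m hm => hS m (Finset.mem_of_mem_filter _ hm)
  have hrank_eq : ∀ m ∈ S₀, rankIn S₀ m = rankIn S m := by
    intro m hm
    rw [Finset.mem_filter] at hm
    unfold rankIn
    rw [hS₀, Finset.filter_filter]
    congr 1
    apply Finset.filter_congr
    intro z hz
    constructor
    · intro ⟨_, h⟩
      exact h
    · intro h
      refine ⟨?_, h⟩
      intro hQz
      rcases h with h1 | h1
      · subst h1
        exact hm.2 hQz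
      · exact hm.2 (hQ z hz m hm.1 hQz h1)
  have hneg_eq : (belowSeg S s).filter (fun a => ¬ Q a) = belowSeg S₀ s := by
    ext m
    rw [Finset.mem_filter, mem_belowSeg, mem_belowSeg]
    constructor
    · intro ⟨⟨h1, h2⟩, h3⟩
      have hm₀ : m ∈ S₀ := Finset.mem_filter.mpr ⟨h1, h3⟩
      rw [hrank_eq m hm₀]
      exact ⟨hm₀, h2⟩
    · intro ⟨h1, h2⟩
      rw [hrank_eq m h1] at h2
      rw [Finset.mem_filter] at h1
      exact ⟨⟨h1.1, h2⟩, h1.2⟩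
  have hsplit := Finset.card_filter_add_card_filter_not
    (s := belowSeg S s) (p := Q)
  rw [hneg_eq] at hsplit
  rw [card_belowSeg hS s] at hsplit
  rw [card_belowSeg hS₀deg s] at hsplit
  omega

end Seg

/-! ### `maxVar` utilities and the set of non-shadow monomials -/

section MaxVar

variable {l : ℕ}

lemma maxVar_le_iff {m : Fin l → ℕ} {j : ℕ} :
    maxVar m ≤ j ↔ ∀ i : Fin l, 0 < m i → i.1 + 1 ≤ j := by
  unfold maxVar
  rw [Finset.sup_le_iff]
  constructor
  · intro h i hi
    have := h i (Finset.mem_univ i)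
    rw [if_pos hi] at this
    exact this
  · intro h i _
    by_cases hi : 0 < m i
    · rw [if_pos hi]; exact h i hi
    · rw [if_neg hi]; omega

lemma maxVar_le_l (m : Fin l → ℕ) : maxVar m ≤ l :=
  maxVar_le_iff.mpr (fun i _ => i.2)

lemma maxVar_zero : maxVar (fun _ : Fin l => (0:ℕ)) = 0 := by
  apply Nat.le_antisymm _ (Nat.zero_le _)
  rw [maxVar_le_iff]
  intro i hi
  omega

lemma maxVar_pos {m : Fin l → ℕ} {i : Fin l} (h : 0 < m i) : i.1 + 1 ≤ maxVar m := by
  unfold maxVar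
  have h2 := Finset.le_sup (f := fun i : Fin l => if 0 < m i then i.1 + 1 else 0)
    (Finset.mem_univ i)
  simpa [h] using h2

lemma exists_topIdx {m : Fin l → ℕ} (h : 0 < maxVar m) :
    ∃ k : Fin l, maxVar m = k.1 + 1 ∧ 0 < m k := by
  have hne : (Finset.univ : Finset (Fin l)).Nonempty := by
    by_contra hc
    rw [Finset.not_nonempty_iff_eq_empty] at hc
    unfold maxVar at h
    rw [hc] at h
    simp at h
  obtain ⟨k, _, hk⟩ := Finset.exists_mem_eq_sup Finset.univ hne
    (fun i : Fin l => if 0 < m i then i.1 + 1 else 0)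
  unfold maxVar at h ⊢
  rw [hk] at h ⊢
  by_cases hmk : 0 < m k
  · rw [if_pos hmk] at h ⊢
    exact ⟨k, rfl, hmk⟩
  · rw [if_neg hmk] at h
    omega

lemma mdeg_pos_maxVar {m : Fin l → ℕ} (h : 0 < mdeg m) : 0 < maxVar m := by
  have : ∃ i, 0 < m i := by
    by_contra hc
    push_neg at hc
    have : mdeg m = 0 := Finset.sum_eq_zero (fun i _ => by have := hc i; omega)
    omega
  obtain ⟨i, hi⟩ := this
  have := maxVar_pos hi
  omega

lemma maxVar_add_single {b : Fin l → ℕ} {k : Fin l} (h : maxVar b ≤ k.1 + 1) :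
    maxVar (b + Pi.single k 1) = k.1 + 1 := by
  apply Nat.le_antisymm
  · rw [maxVar_le_iff]
    intro i hi
    simp only [Pi.add_apply, Pi.single_apply] at hi
    by_cases hik : i = k
    · subst hik; omega
    · rw [if_neg hik] at hi
      have : 0 < b i := by omega
      have := maxVar_pos this
      omega
  · apply maxVar_pos
    simp [Pi.single_apply]

lemma maxVar_move_le {b : Fin l → ℕ} {i k : Fin l} {j : ℕ}
    (hb : maxVar b ≤ j) (hk : k.1 + 1 ≤ j) : maxVar (b - Pi.single i 1 + Pi.single k 1) ≤ j := by
  rw [maxVar_le_iff]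
  intro t ht
  simp only [Pi.add_apply, Pi.sub_apply, Pi.single_apply] at ht
  by_cases htk : t = k
  · subst htk; omega
  · rw [if_neg htk] at ht
    have : 0 < b t := by omega
    have := maxVar_pos this
    omega

/-- Big elements have small `maxVar`: being supported on few variables is
upward closed in revlex among monomials of the same degree. -/
lemma maxVar_up_closed {a b : Fin l → ℕ} (hdeg : mdeg b = mdeg a) {j : ℕ}
    (ha : maxVar a ≤ j) (hgt : RevLexGT b a) : maxVar b ≤ j := by
  by_contra hc
  push_neg at hc
  obtain ⟨t, htv, htpos⟩ := exists_topIdx (show 0 < maxVar b by omega)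
  have hab : RevLexGT a b := by
    right
    refine ⟨hdeg.symm, t, fun s hst => ?_, ?_⟩
    · have hbs : b s = 0 := by
        by_contra hbs
        have := maxVar_pos (show 0 < b s by omega)
        omega
      have has : a s = 0 := by
        by_contra has
        have := maxVar_pos (show 0 < a s by omega)
        omega
      rw [hbs, has]
    · have hat : a t = 0 := by
        by_contra hat
        have := maxVar_pos (show 0 < a t by omega)
        omega
      omega
  exact rgt_asymm hdeg hgt hab

lemma sub_single_add_single {m : Fin l → ℕ} {i : Fin l} (h : 0 < m i) :
    (m - Pi.single i 1) + Pi.single i 1 = m := by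
  funext t
  simp only [Pi.add_apply, Pi.sub_apply, Pi.single_apply]
  by_cases hti : t = i
  · subst hti
    have h1 : (if t = t then (1:ℕ) else 0) = 1 := if_pos rfl
    rw [h1]
    omega
  · simp [hti]

lemma mdeg_sub_single {m : Fin l → ℕ} {i : Fin l} (h : 0 < m i) :
    mdeg (m - Pi.single i 1) = mdeg m - 1 := by
  have := mdeg_add_single (m - Pi.single i 1) i 1
  rw [sub_single_add_single h] at this
  omega

end MaxVar

section NSet

variable {l : ℕ}

lemma add_single_inj {b : Fin l → ℕ} {k1 k2 : Fin l}
    (h : b + Pi.single k1 1 = b + Pi.single k2 1) : k1 = k2 := by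
  by_contra hne
  have h1 := congrFun h k1
  simp only [Pi.add_apply, Pi.single_apply] at h1
  rw [if_neg hne] at h1
  simp at h1

/-- The monomials of the next degree that are **not** in the shadow of the
ideal complementing `B`: those all of whose divisors lie in `B`. -/
noncomputable def NSet (B : Finset (Fin l → ℕ)) : Finset (Fin l → ℕ) :=
  B.biUnion (fun b =>
    (Finset.univ.filter (fun k : Fin l => maxVar b ≤ k.1 + 1)).image
      (fun k => b + Pi.single k 1))

lemma mem_NSet {B : Finset (Fin l → ℕ)} {m : Fin l → ℕ} :
    m ∈ NSet B ↔ ∃ b ∈ B, ∃ k : Fin l, maxVar b ≤ k.1 + 1 ∧ m = b + Pi.single k 1 := by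
  unfold NSet
  rw [Finset.mem_biUnion]
  constructor
  · intro ⟨b, hb, hm⟩
    rw [Finset.mem_image] at hm
    obtain ⟨k, hk, hmk⟩ := hm
    rw [Finset.mem_filter] at hk
    exact ⟨b, hb, k, hk.2, hmk.symm⟩
  · intro ⟨b, hb, k, hk, hm⟩
    exact ⟨b, hb, Finset.mem_image.mpr ⟨k, Finset.mem_filter.mpr ⟨Finset.mem_univ _, hk⟩, hm.symm⟩⟩

lemma NSet_deg {B : Finset (Fin l → ℕ)} {d : ℕ} (hB : ∀ b ∈ B, mdeg b = d) :
    ∀ m ∈ NSet B, mdeg m = d + 1 := by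
  intro m hm
  obtain ⟨b, hb, k, hk, hm⟩ := mem_NSet.mp hm
  rw [hm, mdeg_add_single, hB b hb]

/-- Counting the non-shadow monomials with `maxVar ≤ J`. -/
lemma card_NSet_filter (B : Finset (Fin l → ℕ)) (J : ℕ) (hJ : J ≤ l) :
    ((NSet B).filter (fun m => maxVar m ≤ J)).card
      = ∑ j ∈ Finset.Icc 1 J, (B.filter (fun b => maxVar b ≤ j)).card := by
  classical
  unfold NSet
  rw [Finset.filter_biUnion]
  rw [Finset.card_biUnion]
  · have hterm : ∀ b ∈ B,
        (((Finset.univ.filter (fun k : Fin l => maxVar b ≤ k.1 + 1)).image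
          (fun k => b + Pi.single k 1)).filter (fun m => maxVar m ≤ J)).card
        = ((Finset.Icc 1 J).filter (fun j => maxVar b ≤ j)).card := by
      intro b _
      rw [Finset.filter_image]
      rw [Finset.card_image_of_injOn (fun k1 _ k2 _ heq => add_single_inj heq)]
      apply Finset.card_bij (fun k _ => k.1 + 1)
      · intro k hk
        simp only [Finset.mem_filter, Finset.mem_univ, true_and] at hk
        obtain ⟨h1, h2⟩ := hk
        rw [maxVar_add_single h1] at h2
        simp only [Finset.mem_filter, Finset.mem_Icc]
        exact ⟨⟨by omega, h2⟩, h1⟩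
      · intro k1 h1 k2 h2 heq
        change k1.1 + 1 = k2.1 + 1 at heq
        exact Fin.ext (by omega)
      · intro j hj
        simp only [Finset.mem_filter, Finset.mem_Icc] at hj
        have hjl : j - 1 < l := by omega
        have hb : maxVar b ≤ (⟨j - 1, hjl⟩ : Fin l).1 + 1 := by
          show maxVar b ≤ (j - 1) + 1
          omega
        refine ⟨⟨j - 1, hjl⟩, ?_, by show (j-1) + 1 = j; omega⟩
        simp only [Finset.mem_filter, Finset.mem_univ, true_and]
        refine ⟨hb, ?_⟩
        rw [maxVar_add_single hb]
        show (j - 1) + 1 ≤ J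
        omega
    rw [Finset.sum_congr rfl hterm]
    simp only [Finset.card_filter]
    rw [Finset.sum_comm]
  · -- disjointness
    intro b1 h1 b2 h2 hne
    apply Finset.disjoint_left.mpr
    intro m hm1 hm2
    rw [Finset.mem_filter, Finset.mem_image] at hm1 hm2
    obtain ⟨⟨k1, hk1, hmk1⟩, _⟩ := hm1
    obtain ⟨⟨k2, hk2, hmk2⟩, _⟩ := hm2
    rw [Finset.mem_filter] at hk1 hk2
    apply hne
    have hv1 : maxVar m = k1.1 + 1 := by rw [← hmk1, maxVar_add_single hk1.2]
    have hv2 : maxVar m = k2.1 + 1 := by rw [← hmk2, maxVar_add_single hk2.2]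
    have hk12 : k1 = k2 := Fin.ext (by omega)
    subst hk12
    have : b1 + Pi.single k1 1 = b2 + Pi.single k1 1 := by rw [hmk1, hmk2]
    funext t
    have := congrFun this t
    simp only [Pi.add_apply] at this
    omega

lemma card_NSet (B : Finset (Fin l → ℕ)) :
    (NSet B).card = ∑ j ∈ Finset.Icc 1 l, (B.filter (fun b => maxVar b ≤ j)).card := by
  rw [← card_NSet_filter B l le_rfl]
  congr 1
  exact (Finset.filter_true_of_mem (fun m _ => maxVar_le_l m)).symm

end NSet

/-! ### The greedy almost reverse lexicographic construction -/

section Construction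

variable {l : ℕ}

lemma add_sub_single_cancel (b : Fin l → ℕ) (g : Fin l) :
    (b + Pi.single g 1) - Pi.single g 1 = b := by
  funext t
  simp only [Pi.add_apply, Pi.sub_apply]
  omega

lemma add_sub_single_comm (b : Fin l → ℕ) {i g : Fin l} (hig : i ≠ g) :
    (b + Pi.single g 1) - Pi.single i 1 = (b - Pi.single i 1) + Pi.single g 1 := by
  funext t
  simp only [Pi.add_apply, Pi.sub_apply, Pi.single_apply]
  by_cases h1 : t = i
  · subst h1
    rw [if_neg hig]
    omega
  · rw [if_neg h1]
    omega

noncomputable def Bset (l : ℕ) (ds : List ℕ) : ℕ → Finset (Fin l → ℕ)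
  | 0 => {fun _ => 0}
  | d+1 => belowSeg (NSet (Bset l ds d)) (fro l ds (d+1))

lemma Bset_zero (ds : List ℕ) : Bset l ds 0 = {fun _ => 0} := rfl

lemma Bset_succ (ds : List ℕ) (d : ℕ) :
    Bset l ds (d+1) = belowSeg (NSet (Bset l ds d)) (fro l ds (d+1)) := rfl

variable {ds : List ℕ}

theorem Bset_inv (hl : 1 ≤ l) (hds : ∀ d ∈ ds, 1 ≤ d) : ∀ d,
    (∀ m ∈ Bset l ds d, mdeg m = d) ∧
    (∀ j, 1 ≤ j → j ≤ l →
      ((Bset l ds d).filter (fun m => maxVar m ≤ j)).card = fro j ds d) ∧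
    (∀ m ∈ Bset l ds d, ∀ i k : Fin l, i < k → 0 < m i →
      m - Pi.single i 1 + Pi.single k 1 ∈ Bset l ds d) := by
  intro d
  induction d with
  | zero =>
    refine ⟨?_, ?_, ?_⟩
    · intro m hm
      rw [Bset_zero, Finset.mem_singleton] at hm
      subst hm
      simp [mdeg]
    · intro j hj hjl
      rw [Bset_zero]
      have : ({fun _ => 0} : Finset (Fin l → ℕ)).filter (fun m => maxVar m ≤ j)
          = {fun _ => 0} := by
        apply Finset.filter_true_of_mem
        intro m hm
        rw [Finset.mem_singleton] at hm
        subst hm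
        rw [maxVar_zero]
        omega
      rw [this, Finset.card_singleton, fro_d0 hds]
    · intro m hm i k _ hmi
      rw [Bset_zero, Finset.mem_singleton] at hm
      subst hm
      simp at hmi
  | succ d ih =>
    obtain ⟨hdeg, hcount, hcost⟩ := ih
    have hSdeg : ∀ m ∈ NSet (Bset l ds d), mdeg m = d + 1 := NSet_deg hdeg
    have hScard : (NSet (Bset l ds d)).card = ∑ j ∈ Finset.Icc 1 l, fro j ds d := by
      rw [card_NSet]
      apply Finset.sum_congr rfl
      intro j hj
      rw [Finset.mem_Icc] at hj
      exact hcount j hj.1 hj.2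
    have hfeas : fro l ds (d+1) ≤ (NSet (Bset l ds d)).card := by
      rw [hScard]
      exact fro_feas hds hl d
    refine ⟨?_, ?_, ?_⟩
    · intro m hm
      rw [Bset_succ] at hm
      exact hSdeg m (belowSeg_subset _ _ hm)
    · -- the count invariant
      intro j hj hjl
      rw [Bset_succ]
      rw [card_belowSeg_filter hSdeg (fro l ds (d+1)) (fun m => maxVar m ≤ j)
        (fun a ha b hb hQa hgt =>
          maxVar_up_closed (by rw [hSdeg a ha, hSdeg b hb]) hQa hgt)]
      have h1 : ((NSet (Bset l ds d)).filter (fun a => ¬ maxVar a ≤ j)).card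
          = ∑ i ∈ Finset.Icc (j+1) l, fro i ds d := by
        have hsplit := Finset.card_filter_add_card_filter_not
          (s := NSet (Bset l ds d)) (p := fun a => maxVar a ≤ j)
        have h2 : ((NSet (Bset l ds d)).filter (fun a => maxVar a ≤ j)).card
            = ∑ i ∈ Finset.Icc 1 j, fro i ds d := by
          rw [card_NSet_filter _ j hjl]
          apply Finset.sum_congr rfl
          intro i hi
          rw [Finset.mem_Icc] at hi
          exact hcount i hi.1 (le_trans hi.2 hjl)
        have h3 : ∑ i ∈ Finset.Icc 1 l, fro i ds d
            = ∑ i ∈ Finset.Icc 1 j, fro i ds d + ∑ i ∈ Finset.Icc (j+1) l, fro i ds d := by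
          rw [← Finset.Ico_add_one_right_eq_Icc, ← Finset.Ico_add_one_right_eq_Icc, ← Finset.Ico_add_one_right_eq_Icc]
          exact (Finset.sum_Ico_consecutive _ (by omega) (by omega)).symm
        omega
      rw [h1]
      have h4 := fro_iter hds hl (l - j) j (by omega) hj d
      have h5 : min (fro l ds (d+1)) (NSet (Bset l ds d)).card = fro l ds (d+1) := by
        omega
      rw [h5, h4]
      omega
    · -- costability
      intro m hm i k hik hmi
      rw [Bset_succ] at hm ⊢
      have hmS : m ∈ NSet (Bset l ds d) := belowSeg_subset _ _ hm
      obtain ⟨b, hb, g, hgb, hmbg⟩ := mem_NSet.mp hmS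
      have hmove : RevLexGT m (m - Pi.single i 1 + Pi.single k 1) := by
        have := rgt_of_move (w := m - Pi.single i 1) hik
        rwa [sub_single_add_single hmi] at this
      refine belowSeg_down hSdeg hm ?_ hmove
      -- show the moved monomial is still a non-shadow monomial
      by_cases hig : i = g
      · subst hig
        rw [hmbg, add_sub_single_cancel]
        apply mem_NSet.mpr
        refine ⟨b, hb, k, ?_, rfl⟩
        have : (i:ℕ) < k := hik
        omega
      · have hbi : 0 < b i := by
          have : m i = b i := by
            rw [hmbg]
            simp only [Pi.add_apply, Pi.single_apply]
            rw [if_neg hig]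
            omega
          omega
        have hilg : i.1 < g.1 := by
          have h6 := maxVar_pos hbi
          have h7 : i.1 ≠ g.1 := fun hc => hig (Fin.ext hc)
          omega
        rcases le_or_gt (k.1) (g.1) with hkg | hkg
        · -- move inside, then append x_g
          have hb' : b - Pi.single i 1 + Pi.single k 1 ∈ Bset l ds d :=
            hcost b hb i k hik hbi
          apply mem_NSet.mpr
          refine ⟨b - Pi.single i 1 + Pi.single k 1, hb', g, ?_, ?_⟩
          · exact maxVar_move_le hgb (by omega)
          · rw [hmbg, add_sub_single_comm b hig, add_right_comm]
        · -- move x_i to x_g inside, then append x_k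
          have hb' : b - Pi.single i 1 + Pi.single g 1 ∈ Bset l ds d :=
            hcost b hb i g (Fin.lt_def.mpr hilg) hbi
          apply mem_NSet.mpr
          refine ⟨b - Pi.single i 1 + Pi.single g 1, hb', k, ?_, ?_⟩
          · exact maxVar_move_le (le_trans hgb (by omega)) (by omega)
          · rw [hmbg, add_sub_single_comm b hig]

end Construction

/-! ### Assembly: the almost reverse lexicographic ideal -/

section Assembly

variable {l : ℕ} {ds : List ℕ}

lemma Bset_divisor (hl : 1 ≤ l) (hds : ∀ d ∈ ds, 1 ≤ d) {d : ℕ} {m : Fin l → ℕ}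
    (hm : m ∈ Bset l ds (d+1)) {i : Fin l} (hmi : 0 < m i) :
    m - Pi.single i 1 ∈ Bset l ds d := by
  obtain ⟨hdeg, hcount, hcost⟩ := Bset_inv hl hds d
  have hmS : m ∈ NSet (Bset l ds d) := by
    rw [Bset_succ] at hm
    exact belowSeg_subset _ _ hm
  obtain ⟨b, hb, g, hgb, hmbg⟩ := mem_NSet.mp hmS
  by_cases hig : i = g
  · subst hig
    rw [hmbg, add_sub_single_cancel]
    exact hb
  · have hbi : 0 < b i := by
      have : m i = b i := by
        rw [hmbg]
        simp only [Pi.add_apply, Pi.single_apply]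
        rw [if_neg hig]
        omega
      omega
    have hilg : i.1 < g.1 := by
      have h6 := maxVar_pos hbi
      have h7 : i.1 ≠ g.1 := fun hc => hig (Fin.ext hc)
      omega
    have heq : m - Pi.single i 1 = b - Pi.single i 1 + Pi.single g 1 := by
      rw [hmbg, add_sub_single_comm b hig]
    rw [heq]
    exact hcost b hb i g (Fin.lt_def.mpr hilg) hbi

lemma Bset_card (hl : 1 ≤ l) (hds : ∀ d ∈ ds, 1 ≤ d) (d : ℕ) :
    (Bset l ds d).card = fro l ds d := by
  obtain ⟨_, hcount, _⟩ := Bset_inv hl hds d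
  have := hcount l hl le_rfl
  rwa [Finset.filter_true_of_mem (fun m _ => maxVar_le_l m)] at this

/-- The almost reverse lexicographic ideal realizing the Fröberg sequence. -/
def Kideal (l : ℕ) (ds : List ℕ) : Set (Fin l → ℕ) := {m | m ∉ Bset l ds (mdeg m)}

lemma Bset_down (hl : 1 ≤ l) (hds : ∀ d ∈ ds, 1 ≤ d) :
    ∀ D (m' : Fin l → ℕ), mdeg m' = D → m' ∈ Bset l ds D →
      ∀ m : Fin l → ℕ, (∀ i, m i ≤ m' i) → m ∈ Bset l ds (mdeg m) := by
  intro D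
  induction D using Nat.strong_induction_on with
  | _ D ih =>
    intro m' hdeg' hm' m hle
    have hdm : mdeg m ≤ mdeg m' := Finset.sum_le_sum (fun i _ => hle i)
    by_cases heq : mdeg m = D
    · have hmm : m = m' := by
        by_contra hne
        have hex : ∃ i, m i < m' i := by
          by_contra hc
          push_neg at hc
          exact hne (funext fun i => le_antisymm (hle i) (hc i))
        obtain ⟨i, hi⟩ := hex
        have : mdeg m < mdeg m' :=
          Finset.sum_lt_sum (fun i _ => hle i) ⟨i, Finset.mem_univ i, hi⟩
        omega
      rw [heq, hmm]
      exact hm'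
    · have hlt : mdeg m < D := by omega
      have hD1 : 1 ≤ D := by omega
      obtain ⟨i, hi⟩ : ∃ i, m i < m' i := by
        by_contra hc
        push_neg at hc
        have : m = m' := funext fun i => le_antisymm (hle i) (hc i)
        rw [this] at hlt
        omega
      have hm'' : m' - Pi.single i 1 ∈ Bset l ds (D-1) := by
        have h1 : m' ∈ Bset l ds ((D-1)+1) := by
          rw [show (D-1)+1 = D by omega]
          exact hm'
        exact Bset_divisor hl hds h1 (by omega)
      have hdeg'' : mdeg (m' - Pi.single i 1) = D - 1 := by
        rw [mdeg_sub_single (by omega : 0 < m' i), hdeg']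
      apply ih (D-1) (by omega) (m' - Pi.single i 1) hdeg'' hm'' m
      intro t
      simp only [Pi.sub_apply, Pi.single_apply]
      by_cases hti : t = i
      · subst hti
        rw [if_pos rfl]
        omega
      · rw [if_neg hti]
        have := hle t
        omega

theorem K_monIdeal (hl : 1 ≤ l) (hds : ∀ d ∈ ds, 1 ≤ d) : MonIdeal (Kideal l ds) := by
  intro m hm m' hle
  by_contra hc
  simp only [Kideal, Set.mem_setOf_eq, not_not] at hc hm
  exact hm (Bset_down hl hds (mdeg m') m' rfl hc m hle)

theorem K_hilb (hl : 1 ≤ l) (hds : ∀ d ∈ ds, 1 ≤ d) (d : ℕ) :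
    hilb (Kideal l ds) d = fro l ds d := by
  have hset : {m : Fin l → ℕ | mdeg m = d ∧ m ∉ Kideal l ds} = ↑(Bset l ds d) := by
    ext m
    simp only [Set.mem_setOf_eq, Kideal, not_not, Finset.coe_sort_coe, Finset.mem_coe]
    constructor
    · intro ⟨h1, h2⟩
      rwa [h1] at h2
    · intro h
      have hdeg := (Bset_inv hl hds d).1 m h
      exact ⟨hdeg, by rwa [hdeg]⟩
  rw [hilb, hset, Set.ncard_coe_finset, Bset_card hl hds d]

theorem K_arl (hl : 1 ≤ l) (hds : ∀ d ∈ ds, 1 ≤ d) : ARL (Kideal l ds) := by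
  intro M N hmin hdeg hgt
  obtain ⟨hNK, hNmin⟩ := hmin
  rcases Nat.eq_zero_or_pos (mdeg N) with hD0 | hDpos
  · exfalso
    apply hNK
    show N ∈ Bset l ds (mdeg N)
    have hN0 : N = (fun _ => 0) := by
      funext i
      have := Finset.sum_eq_zero_iff.mp hD0 i (Finset.mem_univ i)
      exact this
    rw [hD0, Bset_zero, hN0]
    exact Finset.mem_singleton_self _
  · obtain ⟨D', hD'⟩ : ∃ D', mdeg N = D' + 1 := ⟨mdeg N - 1, by omega⟩
    have hdiv : ∀ i : Fin l, 0 < N i → N - Pi.single i 1 ∈ Bset l ds D' := by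
      intro i hNi
      have hsub : ∀ t : Fin l, (N - Pi.single i 1 : Fin l → ℕ) t ≤ N t := by
        intro t
        simp only [Pi.sub_apply]
        omega
      have hne : N - Pi.single i 1 ≠ N := by
        intro hc
        have := congrFun hc i
        simp [Pi.sub_apply, Pi.single_apply] at this
        omega
      have hnotK : N - Pi.single i 1 ∉ Kideal l ds := fun hmem => hne (hNmin _ hmem hsub)
      simp only [Kideal, Set.mem_setOf_eq, not_not] at hnotK
      rwa [mdeg_sub_single hNi, hD', Nat.add_sub_cancel] at hnotK
    have hNS : N ∈ NSet (Bset l ds D') := by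
      have h0 : 0 < maxVar N := mdeg_pos_maxVar (by omega)
      obtain ⟨g, hgv, hgpos⟩ := exists_topIdx h0
      apply mem_NSet.mpr
      refine ⟨N - Pi.single g 1, hdiv g hgpos, g, ?_, (sub_single_add_single hgpos).symm⟩
      rw [maxVar_le_iff]
      intro t ht
      simp only [Pi.sub_apply] at ht
      have hNt : 0 < N t := by omega
      have := maxVar_pos hNt
      omega
    by_contra hMK
    simp only [Kideal, Set.mem_setOf_eq, not_not] at hMK
    rw [hdeg] at hMK
    have hNnot : N ∉ Bset l ds (mdeg N) := hNK
    have hSdeg : ∀ m ∈ NSet (Bset l ds D'), mdeg m = D' + 1 :=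
      NSet_deg (Bset_inv hl hds D').1
    have hsep : RevLexGT N M := by
      apply belowSeg_sep hSdeg hNS
      · rw [← Bset_succ, ← hD']
        exact hNnot
      · rw [← Bset_succ, ← hD']
        exact hMK
    exact rgt_asymm hdeg hgt hsep

end Assembly

/-- Every Fröberg sequence is the Hilbert function of `R/K` for an
almost reverse lexicographic ideal `K` in `k[x_1,…,x_l]` (`l = n` if `n ≥ 1`,
`l = 1` if `n = 0`); in particular it is unimodal at each tail. -/
theorem fro_realizable_by_arl (n : ℕ) (ds : List ℕ) (hds : ∀ d ∈ ds, 1 ≤ d) :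
    (∃ K : Set (Fin (max n 1) → ℕ),
        MonIdeal K ∧ ARL K ∧ ∀ d, hilb K d = fro n ds d) ∧
    UnimodalAtTails (fro n ds) := by
  have hl : 1 ≤ max n 1 := le_max_right n 1
  constructor
  · refine ⟨Kideal (max n 1) ds, K_monIdeal hl hds, K_arl hl hds, ?_⟩
    intro d
    rw [K_hilb hl hds d, ← fro_max_eq]
  · exact fro_unimodal n hds
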